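/- arXiv:1805.02344 — 3 statements merged into one kernel-verified Lean document; each statement's English description precedes it below -/
import Mathlib

section
/- Let n, η : Ω → ℝ^m and x : Ω → ℝ^k be random vectors on a probability space (Ω, F, P) with square-integrable components, suppose n is independent of the pair (x, η), suppose E[n_i] = 1 for every i, and suppose E[x_j] = 0 for every j. Let A ∈ ℝ^{m×k}, let e = (n − 1) ⊙ (Ax) + η be the embedded error, and let Γ_xx ∈ ℝ^{k×k} be the covariance matrix of x, (Γ_xx)_{jl} = cov(x_j, x_l). Then for all indices i, j, cov(e_i, e_j) = cov(η_i, η_j) + cov(n_i, n_j) · (A Γ_xx Aᵀ)_{ij}; that is, the covariance of the embedded error is Γ_ee = Γ_ηη + Γ_nn ⊙ (A Γ_xx Aᵀ). -/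
open MeasureTheory Matrix ProbabilityTheory
open scoped NNReal ENNReal

lemma my_l2_mul {Ω : Type*} [MeasurableSpace Ω] {P : Measure Ω} {f g : Ω → ℝ}
    (hf : MemLp f 2 P) (hg : MemLp g 2 P) : Integrable (fun ω => f ω * g ω) P := by
  have h : MemLp (f • g) 1 P := hg.smul hf (hpqr := ⟨by rw [inv_one]; exact ENNReal.inv_two_add_inv_two⟩)
  exact memLp_one_iff_integrable.mp h


/-- Covariance of the embedded error `e = (n - 1) ⊙ (A x) + η`:
if `n` is independent of the pair `(x, η)`, the components are square-integrable,
`E[n i] = 1` and `E[x j] = 0`, then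
`cov(e i, e j) = cov(η i, η j) + cov(n i, n j) * (A Γxx Aᵀ) i j`. -/
theorem embedded_error_covariance {Ω : Type*} [MeasurableSpace Ω]
    (P : Measure Ω) [IsProbabilityMeasure P] {m k : ℕ}
    (n η : Ω → Fin m → ℝ) (x : Ω → Fin k → ℝ)
    (hn : Measurable n) (hη : Measurable η) (hx : Measurable x)
    (hn2 : ∀ i, MemLp (fun ω => n ω i) 2 P)
    (hη2 : ∀ i, MemLp (fun ω => η ω i) 2 P)
    (hx2 : ∀ j, MemLp (fun ω => x ω j) 2 P)
    (hindep : Measure.map (fun ω => (n ω, (x ω, η ω))) P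
        = (Measure.map n P).prod (Measure.map (fun ω => (x ω, η ω)) P))
    (hnmean : ∀ i, ∫ ω, n ω i ∂P = 1)
    (hxmean : ∀ j, ∫ ω, x ω j ∂P = 0)
    (A : Matrix (Fin m) (Fin k) ℝ) (i j : Fin m) :
    let e : Ω → Fin m → ℝ := fun ω i => (n ω i - 1) * A.mulVec (x ω) i + η ω i
    let Γxx : Matrix (Fin k) (Fin k) ℝ :=
      Matrix.of fun j l => (∫ ω, x ω j * x ω l ∂P) - (∫ ω, x ω j ∂P) * (∫ ω, x ω l ∂P)
    (∫ ω, e ω i * e ω j ∂P) - (∫ ω, e ω i ∂P) * (∫ ω, e ω j ∂P)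
      = ((∫ ω, η ω i * η ω j ∂P) - (∫ ω, η ω i ∂P) * (∫ ω, η ω j ∂P))
        + ((∫ ω, n ω i * n ω j ∂P) - (∫ ω, n ω i ∂P) * (∫ ω, n ω j ∂P))
            * (A * Γxx * Aᵀ) i j := by
  intro e Γxx
  have hxη : Measurable (fun ω => (x ω, η ω)) := hx.prodMk hη
  have hIF : IndepFun n (fun ω => (x ω, η ω)) P :=
    (indepFun_iff_map_prod_eq_prod_map_map hn.aemeasurable hxη.aemeasurable).mpr hindep
  -- basic facts about u p = A.mulVec (x ω) p
  have humeas : ∀ p : Fin m, Measurable (fun v : Fin k → ℝ => A.mulVec v p) := by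
    intro p
    simp only [Matrix.mulVec, dotProduct]
    exact Finset.measurable_sum _ (fun l _ => (measurable_pi_apply l).const_mul _)
  have hu2 : ∀ p : Fin m, MemLp (fun ω => A.mulVec (x ω) p) 2 P := by
    intro p
    have h : (fun ω => A.mulVec (x ω) p) = fun ω => ∑ l, A p l * x ω l := by
      funext ω; simp [Matrix.mulVec, dotProduct]
    rw [h]
    exact memLp_finset_sum _ (fun l _ => (hx2 l).const_mul _)
  have humean : ∀ p : Fin m, ∫ ω, A.mulVec (x ω) p ∂P = 0 := by
    intro p
    have h : ∀ ω, A.mulVec (x ω) p = ∑ l, A p l * x ω l := by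
      intro ω; simp [Matrix.mulVec, dotProduct]
    rw [integral_congr_ae (Filter.Eventually.of_forall h),
      integral_finset_sum _ (fun l _ => (((hx2 l).integrable one_le_two).const_mul _))]
    simp [integral_const_mul, hxmean]
  have hc2 : ∀ p : Fin m, MemLp (fun ω => n ω p - 1) 2 P := fun p =>
    (hn2 p).sub (memLp_const 1)
  have hcmean : ∀ p : Fin m, ∫ ω, (n ω p - 1) ∂P = 0 := by
    intro p
    rw [integral_sub ((hn2 p).integrable one_le_two) (integrable_const 1)]
    simp [hnmean]
  -- independence statements
  have hcmeas : ∀ p : Fin m, Measurable (fun v : Fin m → ℝ => v p - 1) := fun p =>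
    (measurable_pi_apply p).sub measurable_const
  have Icc : IndepFun (fun ω => (n ω i - 1) * (n ω j - 1))
      (fun ω => A.mulVec (x ω) i * A.mulVec (x ω) j) P :=
    hIF.comp ((hcmeas i).mul (hcmeas j))
      (((humeas i).comp measurable_fst).mul ((humeas j).comp measurable_fst))
  have Icu : ∀ p q : Fin m, IndepFun (fun ω => n ω p - 1) (fun ω => A.mulVec (x ω) q) P :=
    fun p q => hIF.comp (hcmeas p) ((humeas q).comp measurable_fst)
  have Icuη : ∀ p q r : Fin m,
      IndepFun (fun ω => n ω p - 1) (fun ω => A.mulVec (x ω) q * η ω r) P :=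
    fun p q r => hIF.comp (hcmeas p)
      (((humeas q).comp measurable_fst).mul ((measurable_pi_apply r).comp measurable_snd))
  -- integrability
  have hcc_int : Integrable (fun ω => (n ω i - 1) * (n ω j - 1)) P :=
    my_l2_mul (hc2 i) (hc2 j)
  have huu_int : Integrable (fun ω => A.mulVec (x ω) i * A.mulVec (x ω) j) P :=
    my_l2_mul (hu2 i) (hu2 j)
  have huη_int : ∀ q r : Fin m, Integrable (fun ω => A.mulVec (x ω) q * η ω r) P :=
    fun q r => my_l2_mul (hu2 q) (hη2 r)
  have hc_int : ∀ p : Fin m, Integrable (fun ω => n ω p - 1) P :=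
    fun p => (hc2 p).integrable one_le_two
  have hT1 : Integrable (fun ω =>
      ((n ω i - 1) * (n ω j - 1)) * (A.mulVec (x ω) i * A.mulVec (x ω) j)) P :=
    Icc.integrable_mul hcc_int huu_int
  have hT2 : ∀ p q r : Fin m,
      Integrable (fun ω => (n ω p - 1) * (A.mulVec (x ω) q * η ω r)) P :=
    fun p q r => (Icuη p q r).integrable_mul (hc_int p) (huη_int q r)
  have hT4 : Integrable (fun ω => η ω i * η ω j) P := my_l2_mul (hη2 i) (hη2 j)
  have hcu_int : ∀ p q : Fin m, Integrable (fun ω => (n ω p - 1) * A.mulVec (x ω) q) P :=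
    fun p q => (Icu p q).integrable_mul (hc_int p) ((hu2 q).integrable one_le_two)
  -- means of products vanishing by independence
  have hcu_mean : ∀ p q : Fin m, ∫ ω, (n ω p - 1) * A.mulVec (x ω) q ∂P = 0 := by
    intro p q
    have := (Icu p q).integral_fun_mul_eq_mul_integral (hc_int p).aestronglyMeasurable ((hu2 q).integrable one_le_two).aestronglyMeasurable
    simpa [hcmean p] using this
  have hcuη_mean : ∀ p q r : Fin m, ∫ ω, (n ω p - 1) * (A.mulVec (x ω) q * η ω r) ∂P = 0 := by
    intro p q r
    have := (Icuη p q r).integral_fun_mul_eq_mul_integral (hc_int p).aestronglyMeasurable (huη_int q r).aestronglyMeasurable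
    simpa [hcmean p] using this
  -- mean of e
  have hemean : ∀ p : Fin m, ∫ ω, e ω p ∂P = ∫ ω, η ω p ∂P := by
    intro p
    show ∫ ω, ((n ω p - 1) * A.mulVec (x ω) p + η ω p) ∂P = _
    rw [integral_add (hcu_int p p) ((hη2 p).integrable one_le_two), hcu_mean p p, zero_add]
  -- E[cc] = E[n_i n_j] - E[n_i] E[n_j]
  have hccmean : ∫ ω, (n ω i - 1) * (n ω j - 1) ∂P
      = (∫ ω, n ω i * n ω j ∂P) - (∫ ω, n ω i ∂P) * (∫ ω, n ω j ∂P) := by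
    have h : (fun ω => (n ω i - 1) * (n ω j - 1))
        = fun ω => n ω i * n ω j - n ω i - n ω j + 1 := by funext ω; ring
    have hnn := my_l2_mul (hn2 i) (hn2 j)
    have hni := (hn2 i).integrable one_le_two
    have hnj := (hn2 j).integrable one_le_two
    have h1 : Integrable (fun ω => n ω i * n ω j - n ω i) P := hnn.sub hni
    have h2 : Integrable (fun ω => n ω i * n ω j - n ω i - n ω j) P := h1.sub hnj
    rw [h, integral_add h2 (integrable_const 1), integral_sub h1 hnj,
      integral_sub hnn hni]
    simp [hnmean]
  -- E[u_i u_j] = (A Γxx Aᵀ) i j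
  have huumean : ∫ ω, A.mulVec (x ω) i * A.mulVec (x ω) j ∂P = (A * Γxx * Aᵀ) i j := by
    have h : ∀ ω, A.mulVec (x ω) i * A.mulVec (x ω) j
        = ∑ l, ∑ l', A i l * A j l' * (x ω l * x ω l') := by
      intro ω
      simp only [Matrix.mulVec, dotProduct, Finset.sum_mul_sum]
      exact Finset.sum_congr rfl fun l _ => Finset.sum_congr rfl fun l' _ => by ring
    rw [integral_congr_ae (Filter.Eventually.of_forall h),
      integral_finset_sum _ (fun l _ => integrable_finset_sum _
        (fun l' _ => (my_l2_mul (hx2 l) (hx2 l')).const_mul _))]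
    have h2 : ∀ l, ∫ ω, ∑ l', A i l * A j l' * (x ω l * x ω l') ∂P
        = ∑ l', A i l * A j l' * ∫ ω, x ω l * x ω l' ∂P := by
      intro l
      rw [integral_finset_sum _ (fun l' _ => (my_l2_mul (hx2 l) (hx2 l')).const_mul _)]
      exact Finset.sum_congr rfl fun l' _ => integral_const_mul _ _
    simp only [h2]
    rw [Matrix.mul_apply]
    rw [Finset.sum_comm]
    refine Finset.sum_congr rfl fun l' _ => ?_
    rw [Matrix.mul_apply, Finset.sum_mul]
    refine Finset.sum_congr rfl fun l _ => ?_
    simp only [Γxx, Matrix.of_apply, Matrix.transpose_apply, hxmean, mul_zero, sub_zero]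
    ring
  -- the big expansion
  have hee : ∫ ω, e ω i * e ω j ∂P
      = (∫ ω, ((n ω i - 1) * (n ω j - 1)) * (A.mulVec (x ω) i * A.mulVec (x ω) j) ∂P)
        + ∫ ω, η ω i * η ω j ∂P := by
    have h : ∀ ω, e ω i * e ω j
        = ((n ω i - 1) * (n ω j - 1)) * (A.mulVec (x ω) i * A.mulVec (x ω) j)
          + ((n ω i - 1) * (A.mulVec (x ω) i * η ω j)
            + ((n ω j - 1) * (A.mulVec (x ω) j * η ω i) + η ω i * η ω j)) := by
      intro ω; show ((n ω i - 1) * A.mulVec (x ω) i + η ω i)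
        * ((n ω j - 1) * A.mulVec (x ω) j + η ω j) = _; ring
    have hb : Integrable (fun ω => (n ω j - 1) * (A.mulVec (x ω) j * η ω i)
        + η ω i * η ω j) P := (hT2 j j i).add hT4
    have ha : Integrable (fun ω => (n ω i - 1) * (A.mulVec (x ω) i * η ω j)
        + ((n ω j - 1) * (A.mulVec (x ω) j * η ω i) + η ω i * η ω j)) P :=
      (hT2 i i j).add hb
    rw [integral_congr_ae (Filter.Eventually.of_forall h),
      integral_add hT1 ha, integral_add (hT2 i i j) hb,
      integral_add (hT2 j j i) hT4, hcuη_mean i i j, hcuη_mean j j i]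
    ring
  -- E[cc * uu] = E[cc] * E[uu]
  have hfact : ∫ ω, ((n ω i - 1) * (n ω j - 1)) * (A.mulVec (x ω) i * A.mulVec (x ω) j) ∂P
      = (∫ ω, (n ω i - 1) * (n ω j - 1) ∂P) * ∫ ω, A.mulVec (x ω) i * A.mulVec (x ω) j ∂P :=
    Icc.integral_fun_mul_eq_mul_integral hcc_int.aestronglyMeasurable huu_int.aestronglyMeasurable
  rw [hee, hemean i, hemean j, hfact, hccmean, huumean]
  ring
end

section
/- Let n, η : Ω → ℝ^m and x : Ω → ℝ^k be random vectors on a probability space (Ω, F, P) with square-integrable components, suppose n is independent of the pair (x, η), suppose E[n_i] = 1 for every i, and suppose E[x_j] = 0 for every j. Let A ∈ ℝ^{m×k}, let e = (n − 1) ⊙ (Ax) + η be the embedded error, let Γ_ee, Γ_ηη, Γ_nn, Γ_xx denote the covariance matrices of e, η, n, x respectively, let Γ_ex, Γ_ηx denote the cross-covariance matrices (Γ_ex)_{ij} = cov(e_i, x_j) and (Γ_ηx)_{ij} = cov(η_i, x_j), and assume Γ_xx is invertible. Then the Schur complement of the joint covariance of (e, x) satisfies Γ_ee − Γ_ex Γ_xx^{-1}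 Γ_xe = Γ_ηη + Γ_nn ⊙ (A Γ_xx Aᵀ) − Γ_ηx Γ_xx^{-1} Γ_xη, where Γ_xe = Γ_exᵀ and Γ_xη = Γ_ηxᵀ. -/
open MeasureTheory Matrix
open scoped NNReal ENNReal


theorem memLp_two_integrable_mul {α : Type*} [MeasurableSpace α] {μ : MeasureTheory.Measure α}
    {f g : α → ℝ} (hf : MeasureTheory.MemLp f 2 μ) (hg : MeasureTheory.MemLp g 2 μ) :
    MeasureTheory.Integrable (fun ω => f ω * g ω) μ := by
  have h : (1 : ℝ≥0∞) / 1 = 1 / 2 + 1 / 2 := by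
    rw [ENNReal.add_halves, one_div_one]
  have := hg.smul hf (hpqr := ⟨by rw [ENNReal.inv_two_add_inv_two, inv_one]⟩)
  rw [← MeasureTheory.memLp_one_iff_integrable]
  exact this

/-- Schur complement of the joint covariance of `(e, x)` for the embedded error
`e = (n - 1) ⊙ (A x) + η`: under independence of `n` from `(x, η)`, unit means of `n`,
zero means of `x`, and invertibility of `Γxx`,
`Γee - Γex Γxx⁻¹ Γexᵀ = Γηη + Γnn ⊙ (A Γxx Aᵀ) - Γηx Γxx⁻¹ Γηxᵀ`. -/
theorem embedded_error_schur_complement {Ω : Type*} [MeasurableSpace Ω]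
    (P : Measure Ω) [IsProbabilityMeasure P] {m k : ℕ}
    (n η : Ω → Fin m → ℝ) (x : Ω → Fin k → ℝ)
    (hn : Measurable n) (hη : Measurable η) (hx : Measurable x)
    (hn2 : ∀ i, MemLp (fun ω => n ω i) 2 P)
    (hη2 : ∀ i, MemLp (fun ω => η ω i) 2 P)
    (hx2 : ∀ j, MemLp (fun ω => x ω j) 2 P)
    (hindep : Measure.map (fun ω => (n ω, (x ω, η ω))) P
        = (Measure.map n P).prod (Measure.map (fun ω => (x ω, η ω)) P))
    (hnmean : ∀ i, ∫ ω, n ω i ∂P = 1)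
    (hxmean : ∀ j, ∫ ω, x ω j ∂P = 0)
    (A : Matrix (Fin m) (Fin k) ℝ)
    (e : Ω → Fin m → ℝ)
    (he : e = fun ω i => (n ω i - 1) * A.mulVec (x ω) i + η ω i)
    (Γee Γηη Γnn : Matrix (Fin m) (Fin m) ℝ)
    (Γxx : Matrix (Fin k) (Fin k) ℝ)
    (Γex Γηx : Matrix (Fin m) (Fin k) ℝ)
    (hΓee : Γee = Matrix.of fun i j =>
      (∫ ω, e ω i * e ω j ∂P) - (∫ ω, e ω i ∂P) * (∫ ω, e ω j ∂P))
    (hΓηη : Γηη = Matrix.of fun i j =>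
      (∫ ω, η ω i * η ω j ∂P) - (∫ ω, η ω i ∂P) * (∫ ω, η ω j ∂P))
    (hΓnn : Γnn = Matrix.of fun i j =>
      (∫ ω, n ω i * n ω j ∂P) - (∫ ω, n ω i ∂P) * (∫ ω, n ω j ∂P))
    (hΓxx : Γxx = Matrix.of fun j l =>
      (∫ ω, x ω j * x ω l ∂P) - (∫ ω, x ω j ∂P) * (∫ ω, x ω l ∂P))
    (hΓex : Γex = Matrix.of fun i j =>
      (∫ ω, e ω i * x ω j ∂P) - (∫ ω, e ω i ∂P) * (∫ ω, x ω j ∂P))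
    (hΓηx : Γηx = Matrix.of fun i j =>
      (∫ ω, η ω i * x ω j ∂P) - (∫ ω, η ω i ∂P) * (∫ ω, x ω j ∂P))
    (hinv : IsUnit Γxx) :
    Γee - Γex * Γxx⁻¹ * Γexᵀ
      = Γηη + Matrix.hadamard Γnn (A * Γxx * Aᵀ) - Γηx * Γxx⁻¹ * Γηxᵀ := by
  classical
  -- Basic measurability / integrability facts
  have hxm : ∀ j, Measurable fun ω => x ω j := fun j => (measurable_pi_apply j).comp hx
  have hηm : ∀ i, Measurable fun ω => η ω i := fun i => (measurable_pi_apply i).comp hη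
  have hnm : ∀ i, Measurable fun ω => n ω i := fun i => (measurable_pi_apply i).comp hn
  have hAx2 : ∀ i, MemLp (fun ω => A.mulVec (x ω) i) 2 P := by
    intro i
    have : (fun ω => A.mulVec (x ω) i) = fun ω => ∑ j, A i j * x ω j := by
      funext ω; simp [Matrix.mulVec, dotProduct]
    rw [this]
    exact memLp_finset_sum _ fun j _ => (hx2 j).const_mul _
  have hnm1 : ∀ i, MemLp (fun ω => n ω i - 1) 2 P := fun i => (hn2 i).sub (memLp_const 1)
  -- Independence of n from (x, η)
  have hIndep : ProbabilityTheory.IndepFun n (fun ω => (x ω, η ω)) P := by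
    rw [ProbabilityTheory.indepFun_iff_map_prod_eq_prod_map_map hn.aemeasurable
      ((hx.prodMk hη).aemeasurable)]
    exact hindep
  -- key multiplication lemma
  have keyMul : ∀ (f : (Fin m → ℝ) → ℝ) (g : (Fin k → ℝ) × (Fin m → ℝ) → ℝ),
      Measurable f → Measurable g →
      Integrable (fun ω => f (n ω)) P → Integrable (fun ω => g (x ω, η ω)) P →
      ∫ ω, f (n ω) * g (x ω, η ω) ∂P
        = (∫ ω, f (n ω) ∂P) * ∫ ω, g (x ω, η ω) ∂P := by
    intro f g hf hg hfi hgi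
    exact (hIndep.comp hf hg).integral_fun_mul_eq_mul_integral hfi.aestronglyMeasurable
      hgi.aestronglyMeasurable
  have keyInt : ∀ (f : (Fin m → ℝ) → ℝ) (g : (Fin k → ℝ) × (Fin m → ℝ) → ℝ),
      Measurable f → Measurable g →
      Integrable (fun ω => f (n ω)) P → Integrable (fun ω => g (x ω, η ω)) P →
      Integrable (fun ω => f (n ω) * g (x ω, η ω)) P := by
    intro f g hf hg hfi hgi
    exact (hIndep.comp hf hg).integrable_mul hfi hgi
  -- mean of n i - 1 is zero
  have hn1mean : ∀ i, ∫ ω, (n ω i - 1) ∂P = 0 := by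
    intro i
    rw [integral_sub ((hn2 i).integrable one_le_two) (integrable_const 1)]
    simp [hnmean i]
  -- measurability of g-building blocks
  have hgx : ∀ (j : Fin k), Measurable fun p : (Fin k → ℝ) × (Fin m → ℝ) => p.1 j :=
    fun j => (measurable_pi_apply j).comp measurable_fst
  have hgη : ∀ (i : Fin m), Measurable fun p : (Fin k → ℝ) × (Fin m → ℝ) => p.2 i :=
    fun i => (measurable_pi_apply i).comp measurable_snd
  have hgAx : ∀ (i : Fin m), Measurable fun p : (Fin k → ℝ) × (Fin m → ℝ) => A.mulVec p.1 i := by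
    intro i
    have : (fun p : (Fin k → ℝ) × (Fin m → ℝ) => A.mulVec p.1 i)
        = fun p => ∑ j, A i j * p.1 j := by
      funext p; simp [Matrix.mulVec, dotProduct]
    rw [this]
    exact Finset.measurable_sum _ fun j _ => (hgx j).const_mul _
  -- zero lemma
  have key0 : ∀ (i : Fin m) (g : (Fin k → ℝ) × (Fin m → ℝ) → ℝ),
      Measurable g → Integrable (fun ω => g (x ω, η ω)) P →
      ∫ ω, (n ω i - 1) * g (x ω, η ω) ∂P = 0 := by
    intro i g hg hgi
    have hf : Measurable fun v : Fin m → ℝ => v i - 1 :=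
      (measurable_pi_apply i).sub measurable_const
    have := keyMul (fun v => v i - 1) g hf hg ((hnm1 i).integrable one_le_two) hgi
    rw [this, hn1mean i, zero_mul]
  -- abbreviation u
  set u : Ω → Fin m → ℝ := fun ω i => (n ω i - 1) * A.mulVec (x ω) i with hu
  have huint : ∀ i, Integrable (fun ω => u ω i) P :=
    fun i => memLp_two_integrable_mul (hnm1 i) (hAx2 i)
  have hu0 : ∀ i, ∫ ω, u ω i ∂P = 0 := by
    intro i
    exact key0 i (fun p => A.mulVec p.1 i) (hgAx i) ((hAx2 i).integrable one_le_two)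
  -- ∫ u_i * x_j = 0
  have hux : ∀ (i : Fin m) (j : Fin k), ∫ ω, u ω i * x ω j ∂P = 0 := by
    intro i j
    have : (fun ω => u ω i * x ω j)
        = fun ω => (n ω i - 1) * ((fun p : (Fin k → ℝ) × (Fin m → ℝ) =>
            A.mulVec p.1 i * p.1 j) (x ω, η ω)) := by
      funext ω; simp [hu]; ring
    rw [this]
    exact key0 i _ ((hgAx i).mul (hgx j)) (memLp_two_integrable_mul (hAx2 i) (hx2 j))
  -- ∫ u_i * η_j = 0
  have huη : ∀ (i j : Fin m), ∫ ω, u ω i * η ω j ∂P = 0 := by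
    intro i j
    have : (fun ω => u ω i * η ω j)
        = fun ω => (n ω i - 1) * ((fun p : (Fin k → ℝ) × (Fin m → ℝ) =>
            A.mulVec p.1 i * p.2 j) (x ω, η ω)) := by
      funext ω; simp [hu]; ring
    rw [this]
    exact key0 i _ ((hgAx i).mul (hgη j)) (memLp_two_integrable_mul (hAx2 i) (hη2 j))
  -- integrability of u_i * u_j, u_i * η_j, u_i * x_j
  have huuint : ∀ (i j : Fin m), Integrable (fun ω => u ω i * u ω j) P := by
    intro i j
    have : (fun ω => u ω i * u ω j)
        = fun ω => ((fun v : Fin m → ℝ => (v i - 1) * (v j - 1)) (n ω)) *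
            ((fun p : (Fin k → ℝ) × (Fin m → ℝ) => A.mulVec p.1 i * A.mulVec p.1 j)
              (x ω, η ω)) := by
      funext ω; simp [hu]; ring
    rw [this]
    exact keyInt _ _
      (((measurable_pi_apply i).sub measurable_const).mul
        ((measurable_pi_apply j).sub measurable_const))
      ((hgAx i).mul (hgAx j))
      (memLp_two_integrable_mul (hnm1 i) (hnm1 j)) (memLp_two_integrable_mul (hAx2 i) (hAx2 j))
  have huηint : ∀ (i j : Fin m), Integrable (fun ω => u ω i * η ω j) P := by
    intro i j
    have : (fun ω => u ω i * η ω j)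
        = fun ω => ((fun v : Fin m → ℝ => v i - 1) (n ω)) *
            ((fun p : (Fin k → ℝ) × (Fin m → ℝ) => A.mulVec p.1 i * p.2 j) (x ω, η ω)) := by
      funext ω; simp [hu]; ring
    rw [this]
    exact keyInt _ _ ((measurable_pi_apply i).sub measurable_const)
      ((hgAx i).mul (hgη j)) ((hnm1 i).integrable one_le_two)
      (memLp_two_integrable_mul (hAx2 i) (hη2 j))
  have huxint : ∀ (i : Fin m) (j : Fin k), Integrable (fun ω => u ω i * x ω j) P := by
    intro i j
    have : (fun ω => u ω i * x ω j)
        = fun ω => ((fun v : Fin m → ℝ => v i - 1) (n ω)) *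
            ((fun p : (Fin k → ℝ) × (Fin m → ℝ) => A.mulVec p.1 i * p.1 j) (x ω, η ω)) := by
      funext ω; simp [hu]; ring
    rw [this]
    exact keyInt _ _ ((measurable_pi_apply i).sub measurable_const)
      ((hgAx i).mul (hgx j)) ((hnm1 i).integrable one_le_two)
      (memLp_two_integrable_mul (hAx2 i) (hx2 j))
  -- e mean
  have heint : ∀ i, ∫ ω, e ω i ∂P = ∫ ω, η ω i ∂P := by
    intro i
    rw [he]
    simp only
    rw [integral_add (huint i) ((hη2 i).integrable one_le_two), hu0 i, zero_add]
  -- ∫ u_i u_j factorizes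
  have huu : ∀ (i j : Fin m), ∫ ω, u ω i * u ω j ∂P
      = ((∫ ω, n ω i * n ω j ∂P) - 1) * (∫ ω, A.mulVec (x ω) i * A.mulVec (x ω) j ∂P) := by
    intro i j
    have heq : (fun ω => u ω i * u ω j)
        = fun ω => ((fun v : Fin m → ℝ => (v i - 1) * (v j - 1)) (n ω)) *
            ((fun p : (Fin k → ℝ) × (Fin m → ℝ) => A.mulVec p.1 i * A.mulVec p.1 j)
              (x ω, η ω)) := by
      funext ω; simp [hu]; ring
    rw [heq, keyMul (fun v : Fin m → ℝ => (v i - 1) * (v j - 1))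
      (fun p : (Fin k → ℝ) × (Fin m → ℝ) => A.mulVec p.1 i * A.mulVec p.1 j)
      (((measurable_pi_apply i).sub measurable_const).mul
        ((measurable_pi_apply j).sub measurable_const))
      ((hgAx i).mul (hgAx j))
      (memLp_two_integrable_mul (hnm1 i) (hnm1 j)) (memLp_two_integrable_mul (hAx2 i) (hAx2 j))]
    congr 1
    have : (fun ω => (n ω i - 1) * (n ω j - 1))
        = fun ω => n ω i * n ω j - n ω i - n ω j + 1 := by
      funext ω; ring
    rw [this, integral_add _ (integrable_const 1), integral_sub _ ((hn2 j).integrable one_le_two),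
      integral_sub (memLp_two_integrable_mul (hn2 i) (hn2 j)) ((hn2 i).integrable one_le_two)]
    · simp [hnmean i, hnmean j]
    · exact (memLp_two_integrable_mul (hn2 i) (hn2 j)).sub ((hn2 i).integrable one_le_two)
    · exact ((memLp_two_integrable_mul (hn2 i) (hn2 j)).sub ((hn2 i).integrable one_le_two)).sub
        ((hn2 j).integrable one_le_two)
  -- ∫ (Ax)_i (Ax)_j = (A Γxx Aᵀ) i j
  have hAxAx : ∀ (i j : Fin m),
      ∫ ω, A.mulVec (x ω) i * A.mulVec (x ω) j ∂P = (A * Γxx * Aᵀ) i j := by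
    intro i j
    have heq : (fun ω => A.mulVec (x ω) i * A.mulVec (x ω) j)
        = fun ω => ∑ a, ∑ b, A i a * A j b * (x ω a * x ω b) := by
      funext ω
      simp only [Matrix.mulVec, dotProduct, Finset.sum_mul_sum]
      exact Finset.sum_congr rfl fun a _ => Finset.sum_congr rfl fun b _ => by ring
    rw [heq, integral_finset_sum]
    · have : ∀ a : Fin k, ∫ ω, ∑ b, A i a * A j b * (x ω a * x ω b) ∂P
          = ∑ b, A i a * A j b * ∫ ω, x ω a * x ω b ∂P := by
        intro a
        rw [integral_finset_sum]
        · exact Finset.sum_congr rfl fun b _ => integral_const_mul _ _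
        · exact fun b _ => (memLp_two_integrable_mul (hx2 a) (hx2 b)).const_mul _
      simp only [this]
      rw [hΓxx]
      simp only [Matrix.mul_apply, Matrix.transpose_apply, Matrix.of_apply, hxmean]
      rw [Finset.sum_comm]
      refine Finset.sum_congr rfl fun b _ => ?_
      rw [Finset.sum_mul]
      refine Finset.sum_congr rfl fun a _ => ?_
      ring
    · intro a _
      exact integrable_finset_sum _ fun b _ => (memLp_two_integrable_mul (hx2 a) (hx2 b)).const_mul _
  -- Γex = Γηx
  have hexeq : Γex = Γηx := by
    rw [hΓex, hΓηx]
    ext i j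
    simp only [Matrix.of_apply]
    have : (fun ω => e ω i * x ω j) = fun ω => u ω i * x ω j + η ω i * x ω j := by
      funext ω; rw [he]; simp [hu]; ring
    rw [this, integral_add (huxint i j) (memLp_two_integrable_mul (hη2 i) (hx2 j)), hux i j, zero_add,
      heint i]
  -- Γee = Γηη + hadamard
  have heeeq : Γee = Γηη + Matrix.hadamard Γnn (A * Γxx * Aᵀ) := by
    rw [hΓee, hΓηη]
    ext i j
    simp only [Matrix.add_apply, Matrix.of_apply, Matrix.hadamard_apply]
    have hsplit : (fun ω => e ω i * e ω j)
        = fun ω => u ω i * u ω j + u ω i * η ω j + η ω i * u ω j + η ω i * η ω j := by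
      funext ω; rw [he]; simp [hu]; ring
    have hcomm : (fun ω => η ω i * u ω j) = fun ω => u ω j * η ω i := by
      funext ω; ring
    have hηuint : Integrable (fun ω => η ω i * u ω j) P := by
      rw [hcomm]; exact huηint j i
    have hηu : ∫ ω, η ω i * u ω j ∂P = 0 := by
      rw [hcomm, huη j i]
    have h12 : Integrable (fun ω => u ω i * u ω j + u ω i * η ω j) P :=
      (huuint i j).add (huηint i j)
    have h123 : Integrable (fun ω => u ω i * u ω j + u ω i * η ω j + η ω i * u ω j) P :=
      h12.add hηuint
    rw [hsplit, integral_add h123 (memLp_two_integrable_mul (hη2 i) (hη2 j)),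
      integral_add h12 hηuint,
      integral_add (huuint i j) (huηint i j), huη i j, hηu, huu i j, hAxAx i j,
      heint i, heint j, hΓnn]
    simp only [Matrix.of_apply, hnmean]
    ring
  rw [heeeq, hexeq]
end

section
/- Let x : Ω → ℝ^k and η, n : Ω → ℝ^m be mutually independent random vectors on a probability space (Ω, F, P) having probability density functions π_x, π_η, π_n respectively with respect to Lebesgue measure, and let A ∈ ℝ^{m×k}. Define the intermediate variable u = Ax + η and the observation y = n ⊙ u. Then the random vector (x, u, y) with values in ℝ^k × ℝ^m × ℝ^m has joint probability density function (ξ, v, w) ↦ π_x(ξ) · π_η(v − Aξ) · (∏_{i=1}^m |v_i|^{-1}) · π_n(w_1/v_1, …, w_m/v_m). (This is the density factorization π(u, x | y) ∝ π_x(x) π(u | x) π(y | u) underlying the separable model y = n ⊙ (Ax + η).) -/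
open MeasureTheory Matrix Set
open scoped NNReal ENNReal

namespace SepModelAux

variable {α : Type*} {β : Type*} [MeasurableSpace α] [MeasurableSpace β]

lemma lintegral_piece_add {μ : Measure α} {s : Set α} (hs : MeasurableSet s) (f : α → ℝ≥0∞) :
    (∫⁻ a in s, f a ∂μ) + ∫⁻ a in sᶜ, f a ∂μ = ∫⁻ a, f a ∂μ := by
  rw [← lintegral_add_measure, Measure.restrict_add_restrict_compl hs]

lemma wd_eq_of_le {μ : Measure α} {f g : α → ℝ≥0∞} (hle : g ≤ f)
    (htot : ∫⁻ a, f a ∂μ ≤ ∫⁻ a, g a ∂μ) (hfin : ∫⁻ a, g a ∂μ ≠ ∞) :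
    μ.withDensity f = μ.withDensity g := by
  ext s hs
  rw [withDensity_apply _ hs, withDensity_apply _ hs]
  have h1 : ∫⁻ a in s, g a ∂μ ≤ ∫⁻ a in s, f a ∂μ := lintegral_mono hle
  have h2 : ∫⁻ a in sᶜ, g a ∂μ ≤ ∫⁻ a in sᶜ, f a ∂μ := lintegral_mono hle
  have hsf := lintegral_piece_add (μ := μ) hs f
  have hsg := lintegral_piece_add (μ := μ) hs g
  have key : (∫⁻ a in s, f a ∂μ) + ∫⁻ a in sᶜ, f a ∂μ
      ≤ (∫⁻ a in s, g a ∂μ) + ∫⁻ a in sᶜ, f a ∂μ := by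
    calc (∫⁻ a in s, f a ∂μ) + ∫⁻ a in sᶜ, f a ∂μ = ∫⁻ a, f a ∂μ := hsf
    _ ≤ ∫⁻ a, g a ∂μ := htot
    _ = (∫⁻ a in s, g a ∂μ) + ∫⁻ a in sᶜ, g a ∂μ := hsg.symm
    _ ≤ (∫⁻ a in s, g a ∂μ) + ∫⁻ a in sᶜ, f a ∂μ := add_le_add le_rfl h2
  have hfc : (∫⁻ a in sᶜ, f a ∂μ) ≠ ∞ := by
    intro h
    apply hfin
    have : (∞ : ℝ≥0∞) ≤ ∫⁻ a, g a ∂μ := by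
      calc (∞ : ℝ≥0∞) = (∫⁻ a in s, f a ∂μ) + ∫⁻ a in sᶜ, f a ∂μ := by rw [h, add_top]
      _ = ∫⁻ a, f a ∂μ := hsf
      _ ≤ ∫⁻ a, g a ∂μ := htot
    exact top_le_iff.mp this
  exact le_antisymm ((ENNReal.add_le_add_iff_right hfc).mp key) h1

lemma exists_good_minorant (μ : Measure α) (f : α → ℝ≥0∞) (hfin : ∫⁻ a, f a ∂μ ≠ ∞) :
    ∃ g : α → ℝ≥0∞, Measurable g ∧ g ≤ f ∧ (∫⁻ a, g a ∂μ = ∫⁻ a, f a ∂μ)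
      ∧ μ.withDensity f = μ.withDensity g := by
  obtain ⟨g, hgm, hgle, hg⟩ := exists_measurable_le_lintegral_eq μ f
  exact ⟨g, hgm, hgle, hg.symm, wd_eq_of_le hgle hg.le (by rwa [← hg])⟩

lemma lintegral_mul_prod_le (μ : Measure α) (ν : Measure β) [SFinite μ] [SFinite ν]
    (f : α → ℝ≥0∞) (g : β → ℝ≥0∞) (hf : ∀ a, f a ≠ ∞) (hg : ∫⁻ b, g b ∂ν ≠ ∞) :
    ∫⁻ p, f p.1 * g p.2 ∂(μ.prod ν) ≤ (∫⁻ a, f a ∂μ) * ∫⁻ b, g b ∂ν := by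
  conv_lhs => rw [← iSup_lintegral_measurable_le_eq_lintegral]
  refine iSup_le fun φ => iSup_le fun hφm => iSup_le fun hφ => ?_
  calc ∫⁻ p, φ p ∂(μ.prod ν) = ∫⁻ a, ∫⁻ b, φ (a, b) ∂ν ∂μ :=
        lintegral_prod φ hφm.aemeasurable
    _ ≤ ∫⁻ a, f a * ∫⁻ b, g b ∂ν ∂μ := by
        refine lintegral_mono fun a => ?_
        rw [← lintegral_const_mul' _ _ (hf a)]
        exact lintegral_mono fun b => hφ (a, b)
    _ ≤ (∫⁻ a, f a ∂μ) * ∫⁻ b, g b ∂ν := by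
        rw [← lintegral_mul_const' _ _ hg]

lemma map_equiv_withDensity (e : α ≃ᵐ β) (μ : Measure α) (f : β → ℝ≥0∞) :
    Measure.map e (μ.withDensity fun a => f (e a)) = (Measure.map e μ).withDensity f := by
  ext s hs
  rw [Measure.map_apply e.measurable hs, withDensity_apply _ hs,
    withDensity_apply _ (e.measurable hs), ← lintegral_indicator (e.measurable hs),
    ← lintegral_indicator hs, lintegral_map_equiv (s.indicator f) e]
  refine lintegral_congr fun a => ?_
  by_cases h : e a ∈ s
  · rw [indicator_of_mem h, indicator_of_mem (mem_preimage.mpr h)]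
  · rw [indicator_of_notMem h, indicator_of_notMem (fun hc => h (mem_preimage.mp hc))]

lemma withDensity_mul_aux (μ : Measure α) {f : α → ℝ≥0∞} (hf : Measurable f)
    (hffin : ∀ x, f x < ∞) (g : α → ℝ≥0∞) :
    (μ.withDensity f).withDensity g = μ.withDensity fun a => f a * g a := by
  ext s hs
  rw [withDensity_apply _ hs, withDensity_apply _ hs,
    setLIntegral_withDensity_eq_setLIntegral_mul_non_measurable μ hf g hs
      (ae_of_all _ hffin)]
  rfl

lemma prod_withDensity {μ : Measure α} {ν : Measure β} [SigmaFinite μ] [SigmaFinite ν]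
    {f : α → ℝ≥0∞} {g : β → ℝ≥0∞} (hf : Measurable f) (hg : Measurable g)
    (h1 : SigmaFinite (μ.withDensity f)) (h2 : SigmaFinite (ν.withDensity g)) :
    (μ.withDensity f).prod (ν.withDensity g) = (μ.prod ν).withDensity fun p => f p.1 * g p.2 := by
  refine Measure.prod_eq fun s t hs ht => ?_
  rw [withDensity_apply _ (hs.prod ht), ← Measure.prod_restrict,
    lintegral_prod (fun z => f z.1 * g z.2)
      (((hf.comp measurable_fst).mul (hg.comp measurable_snd)).aemeasurable)]
  calc ∫⁻ a, ∫⁻ b, f a * g b ∂ν.restrict t ∂μ.restrict s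
      = ∫⁻ a, f a * ∫⁻ b, g b ∂ν.restrict t ∂μ.restrict s := by
        refine lintegral_congr fun a => lintegral_const_mul _ hg
    _ = (∫⁻ a, f a ∂μ.restrict s) * ∫⁻ b, g b ∂ν.restrict t := lintegral_mul_const _ hf
    _ = μ.withDensity f s * ν.withDensity g t := by
        rw [withDensity_apply _ hs, withDensity_apply _ ht]


variable {m k : ℕ}

lemma measurable_mulVec (A : Matrix (Fin m) (Fin k) ℝ) :
    Measurable fun ξ : Fin k → ℝ => A.mulVec ξ := by
  refine measurable_pi_lambda _ fun i => ?_
  simpa [Matrix.mulVec, dotProduct] using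
    Finset.measurable_sum Finset.univ fun j _ => (measurable_pi_apply j : Measurable fun x : Fin k → ℝ => x j).const_mul (A i j)

/-- Shear equivalence `(ξ, e, ν) ↦ (ξ, Aξ + e, ν)`. -/
noncomputable def shearEquiv (A : Matrix (Fin m) (Fin k) ℝ) :
    ((Fin k → ℝ) × (Fin m → ℝ) × (Fin m → ℝ)) ≃ᵐ ((Fin k → ℝ) × (Fin m → ℝ) × (Fin m → ℝ)) where
  toFun p := (p.1, A.mulVec p.1 + p.2.1, p.2.2)
  invFun q := (q.1, q.2.1 - A.mulVec q.1, q.2.2)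
  left_inv p := by
    refine Prod.ext rfl (Prod.ext ?_ rfl)
    simp
  right_inv q := by
    refine Prod.ext rfl (Prod.ext ?_ rfl)
    simp
  measurable_toFun := by
    refine measurable_fst.prodMk (Measurable.prodMk ?_ (measurable_snd.comp measurable_snd))
    exact ((measurable_mulVec A).comp measurable_fst).add (measurable_fst.comp measurable_snd)
  measurable_invFun := by
    refine measurable_fst.prodMk (Measurable.prodMk ?_ (measurable_snd.comp measurable_snd))
    exact (measurable_fst.comp measurable_snd).sub ((measurable_mulVec A).comp measurable_fst)

/-- Patched componentwise scaling `(v, ν) ↦ (v, ν ⊙ v)` (identity on coords where `v i = 0`). -/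
noncomputable def scalePair (m : ℕ) : ((Fin m → ℝ) × (Fin m → ℝ)) ≃ᵐ ((Fin m → ℝ) × (Fin m → ℝ)) where
  toFun q := (q.1, fun i => if q.1 i = 0 then q.2 i else q.2 i * q.1 i)
  invFun q := (q.1, fun i => if q.1 i = 0 then q.2 i else q.2 i / q.1 i)
  left_inv q := by
    refine Prod.ext rfl (funext fun i => ?_)
    by_cases h : q.1 i = 0
    · simp [h]
    · simp only [h, if_false]
      exact mul_div_cancel_right₀ _ h
  right_inv q := by
    refine Prod.ext rfl (funext fun i => ?_)
    by_cases h : q.1 i = 0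
    · simp [h]
    · simp only [h, if_false]
      exact div_mul_cancel₀ _ h
  measurable_toFun := by
    refine measurable_fst.prodMk (measurable_pi_lambda _ fun i => Measurable.ite ?_ ?_ ?_)
    · exact ((measurable_pi_apply i).comp measurable_fst) (measurableSet_singleton 0)
    · exact (measurable_pi_apply i).comp measurable_snd
    · exact ((measurable_pi_apply i).comp measurable_snd).mul
        ((measurable_pi_apply i).comp measurable_fst)
  measurable_invFun := by
    refine measurable_fst.prodMk (measurable_pi_lambda _ fun i => Measurable.ite ?_ ?_ ?_)
    · exact ((measurable_pi_apply i).comp measurable_fst) (measurableSet_singleton 0)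
    · exact (measurable_pi_apply i).comp measurable_snd
    · exact ((measurable_pi_apply i).comp measurable_snd).div
        ((measurable_pi_apply i).comp measurable_fst)

lemma bad_null (m : ℕ) : (volume : Measure (Fin m → ℝ)) {v | ∃ i, v i = 0} = 0 := by
  have h : {v : Fin m → ℝ | ∃ i, v i = 0} = ⋃ i, {v : Fin m → ℝ | v i = 0} := by
    ext v; simp
  rw [h]
  refine measure_iUnion_null fun i => ?_
  rw [volume_pi]
  exact Measure.pi_hyperplane _ i 0

lemma good_ae (m : ℕ) : ∀ᵐ v ∂(volume : Measure (Fin m → ℝ)), ∀ i, v i ≠ 0 := by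
  rw [ae_iff]
  convert bad_null m using 2
  ext v; push_neg; rfl

lemma measurable_absprod (m : ℕ) :
    Measurable fun v : Fin m → ℝ => ENNReal.ofReal (∏ i, |v i|) :=
  ENNReal.measurable_ofReal.comp <|
    Finset.measurable_prod _ fun i _ => (measurable_pi_apply i).abs

/-- Key Jacobian computation for the patched scaling. -/
lemma map_scalePair (m : ℕ) :
    Measure.map (scalePair m)
      (((volume : Measure (Fin m → ℝ)).prod volume).withDensity
        fun q => ENNReal.ofReal (∏ i, |q.1 i|))
      = (volume : Measure (Fin m → ℝ)).prod volume := by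
  classical
  set J : (Fin m → ℝ) × (Fin m → ℝ) → ℝ≥0∞ := fun q => ENNReal.ofReal (∏ i, |q.1 i|) with hJ
  have hJm : Measurable J := (measurable_absprod m).comp measurable_fst
  ext s hs
  have hpre : MeasurableSet ((scalePair m) ⁻¹' s) := (scalePair m).measurable hs
  rw [Measure.map_apply (scalePair m).measurable hs, withDensity_apply _ hpre,
    Measure.prod_apply hs, ← lintegral_indicator hpre,
    lintegral_prod _ (hJm.indicator hpre).aemeasurable]
  refine lintegral_congr_ae ?_
  filter_upwards [good_ae m] with v hv
  -- fixed good v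
  have hdet : det (diagonal v) ≠ 0 := by
    rw [det_diagonal]
    exact Finset.prod_ne_zero_iff.mpr fun i _ => hv i
  have hLv : ⇑(Matrix.toLin' (diagonal v)) = fun ν : Fin m → ℝ => (fun i => ν i * v i) := by
    funext ν
    ext i
    rw [Matrix.toLin'_apply, Matrix.mulVec_diagonal]
    exact mul_comm _ _
  have hsv : MeasurableSet (Prod.mk v ⁻¹' s) := measurable_prodMk_left hs
  have hmeasL : Measurable fun ν : Fin m → ℝ => (fun i => ν i * v i) := by
    exact measurable_pi_lambda _ fun i => (measurable_pi_apply i : Measurable fun x : Fin m → ℝ => x i).mul_const (v i)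
  have hTset : (Prod.mk v ⁻¹' ((scalePair m) ⁻¹' s))
      = (fun ν : Fin m → ℝ => (fun i => ν i * v i)) ⁻¹' (Prod.mk v ⁻¹' s) := by
    ext ν
    simp only [mem_preimage]
    have : (scalePair m) (v, ν) = (v, fun i => ν i * v i) := by
      refine Prod.ext rfl (funext fun i => ?_)
      exact if_neg (hv i)
    rw [this]
  have hindic : (fun ν => ((scalePair m) ⁻¹' s).indicator J (v, ν))
      = (Prod.mk v ⁻¹' ((scalePair m) ⁻¹' s)).indicator
          (fun _ => ENNReal.ofReal (∏ i, |v i|)) := by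
    funext ν
    by_cases h : (v, ν) ∈ (scalePair m) ⁻¹' s
    · rw [indicator_of_mem h, indicator_of_mem (by exact h)]
    · rw [indicator_of_notMem h, indicator_of_notMem (by exact h)]
  rw [hindic, hTset]
  have hTmeas : MeasurableSet ((fun ν : Fin m → ℝ => (fun i => ν i * v i)) ⁻¹' (Prod.mk v ⁻¹' s)) :=
    hmeasL hsv
  rw [lintegral_indicator_const hTmeas]
  have hmap : (volume : Measure (Fin m → ℝ))
        ((fun ν : Fin m → ℝ => (fun i => ν i * v i)) ⁻¹' (Prod.mk v ⁻¹' s))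
      = ENNReal.ofReal |(det (diagonal v))⁻¹| * (volume : Measure (Fin m → ℝ)) (Prod.mk v ⁻¹' s) := by
    have := Real.map_matrix_volume_pi_eq_smul_volume_pi hdet
    rw [hLv] at this
    calc (volume : Measure (Fin m → ℝ)) ((fun ν : Fin m → ℝ => (fun i => ν i * v i)) ⁻¹' (Prod.mk v ⁻¹' s))
        = Measure.map (fun ν : Fin m → ℝ => (fun i => ν i * v i)) volume (Prod.mk v ⁻¹' s) := by
          rw [Measure.map_apply hmeasL hsv]
      _ = _ := by rw [this, Measure.smul_apply, smul_eq_mul]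
  rw [hmap, ← mul_assoc]
  have habs : ENNReal.ofReal (∏ i, |v i|) * ENNReal.ofReal |(det (diagonal v))⁻¹| = 1 := by
    rw [← ENNReal.ofReal_mul (Finset.prod_nonneg fun i _ => abs_nonneg _)]
    rw [det_diagonal, abs_inv, Finset.abs_prod]
    rw [mul_inv_cancel₀]
    · exact ENNReal.ofReal_one
    · exact Finset.prod_ne_zero_iff.mpr fun i _ => abs_ne_zero.mpr (hv i)
  rw [habs, one_mul]


lemma shear_preserving (A : Matrix (Fin m) (Fin k) ℝ) :
    MeasurePreserving (shearEquiv A) (volume : Measure ((Fin k → ℝ) × (Fin m → ℝ) × (Fin m → ℝ)))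
      volume := by
  have h2 : (volume : Measure ((Fin m → ℝ) × (Fin m → ℝ)))
      = (volume : Measure (Fin m → ℝ)).prod volume := rfl
  have h3 : (volume : Measure ((Fin k → ℝ) × (Fin m → ℝ) × (Fin m → ℝ)))
      = (volume : Measure (Fin k → ℝ)).prod (volume : Measure ((Fin m → ℝ) × (Fin m → ℝ))) :=
    rfl
  rw [h3]
  have key : MeasurePreserving
      (fun p : (Fin k → ℝ) × (Fin m → ℝ) × (Fin m → ℝ) =>
        (id p.1, ((fun ξ (q : (Fin m → ℝ) × (Fin m → ℝ)) => (A.mulVec ξ + q.1, q.2)) p.1 p.2)))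
      ((volume : Measure (Fin k → ℝ)).prod (volume : Measure ((Fin m → ℝ) × (Fin m → ℝ))))
      ((volume : Measure (Fin k → ℝ)).prod (volume : Measure ((Fin m → ℝ) × (Fin m → ℝ)))) := by
    refine MeasurePreserving.skew_product (f := id)
      (g := fun ξ (q : (Fin m → ℝ) × (Fin m → ℝ)) => (A.mulVec ξ + q.1, q.2))
      (MeasurePreserving.id _) ?_
      (Filter.Eventually.of_forall fun ξ => ?_)
    · refine Measurable.prodMk ?_ (measurable_snd.comp measurable_snd)
      exact ((measurable_mulVec A).comp measurable_fst).add (measurable_fst.comp measurable_snd)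
    · have hmp : MeasurePreserving (fun q : (Fin m → ℝ) × (Fin m → ℝ) => (A.mulVec ξ + q.1, q.2))
          (volume : Measure ((Fin m → ℝ) × (Fin m → ℝ))) volume := by
        rw [h2]
        have hmp2 := (measurePreserving_add_left (volume : Measure (Fin m → ℝ)) (A.mulVec ξ)).prod
          (MeasurePreserving.id (volume : Measure (Fin m → ℝ)))
        have hfe : (Prod.map (fun e : Fin m → ℝ => A.mulVec ξ + e) (id : (Fin m → ℝ) → (Fin m → ℝ)))
            = fun q : (Fin m → ℝ) × (Fin m → ℝ) => (A.mulVec ξ + q.1, q.2) := by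
          funext q
          cases q
          rfl
        rwa [hfe] at hmp2
      exact hmp.map_eq
  have hfun : (fun p : (Fin k → ℝ) × (Fin m → ℝ) × (Fin m → ℝ) =>
        (id p.1, ((fun ξ (q : (Fin m → ℝ) × (Fin m → ℝ)) => (A.mulVec ξ + q.1, q.2)) p.1 p.2)))
      = ⇑(shearEquiv A) := by
    funext p; rfl
  rwa [hfun] at key

noncomputable def scaleEquiv (k m : ℕ) :
    ((Fin k → ℝ) × (Fin m → ℝ) × (Fin m → ℝ)) ≃ᵐ ((Fin k → ℝ) × (Fin m → ℝ) × (Fin m → ℝ)) :=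
  (MeasurableEquiv.refl (Fin k → ℝ)).prodCongr (scalePair m)

lemma map_scaleEquiv (k m : ℕ) :
    Measure.map (scaleEquiv k m)
      ((volume : Measure ((Fin k → ℝ) × (Fin m → ℝ) × (Fin m → ℝ))).withDensity
        fun p => ENNReal.ofReal (∏ i, |p.2.1 i|))
      = volume := by
  have h3 : (volume : Measure ((Fin k → ℝ) × (Fin m → ℝ) × (Fin m → ℝ)))
      = (volume : Measure (Fin k → ℝ)).prod (volume : Measure ((Fin m → ℝ) × (Fin m → ℝ))) := rfl
  haveI sf1 : SigmaFinite ((volume : Measure (Fin k → ℝ)).withDensity fun _ => (1:ℝ≥0∞)) := by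
    rw [show (fun _ : (Fin k → ℝ) => (1:ℝ≥0∞)) = 1 from rfl, withDensity_one]; infer_instance
  haveI sf2 : SigmaFinite ((volume : Measure ((Fin m → ℝ) × (Fin m → ℝ))).withDensity
      fun q => ENNReal.ofReal (∏ i, |q.1 i|)) :=
    SigmaFinite.withDensity_of_ne_top' fun q => ENNReal.ofReal_ne_top
  have hsplit : (volume : Measure ((Fin k → ℝ) × (Fin m → ℝ) × (Fin m → ℝ))).withDensity
        (fun p => ENNReal.ofReal (∏ i, |p.2.1 i|))
      = (volume : Measure (Fin k → ℝ)).prod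
          ((volume : Measure ((Fin m → ℝ) × (Fin m → ℝ))).withDensity
            fun q => ENNReal.ofReal (∏ i, |q.1 i|)) := by
    have hpw := prod_withDensity (μ := (volume : Measure (Fin k → ℝ)))
      (ν := (volume : Measure ((Fin m → ℝ) × (Fin m → ℝ))))
      (f := fun _ => (1:ℝ≥0∞)) (g := fun q => ENNReal.ofReal (∏ i, |q.1 i|))
      measurable_const ((measurable_absprod m).comp measurable_fst) sf1 sf2
    rw [show (fun _ : (Fin k → ℝ) => (1:ℝ≥0∞)) = 1 from rfl, withDensity_one] at hpw
    rw [h3, hpw]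
    congr 1
    funext p
    simp
  rw [hsplit]
  have hmp : MeasurePreserving (Prod.map (id : (Fin k → ℝ) → (Fin k → ℝ)) ⇑(scalePair m))
      ((volume : Measure (Fin k → ℝ)).prod
        ((volume : Measure ((Fin m → ℝ) × (Fin m → ℝ))).withDensity
          fun q => ENNReal.ofReal (∏ i, |q.1 i|)))
      ((volume : Measure (Fin k → ℝ)).prod (volume : Measure ((Fin m → ℝ) × (Fin m → ℝ)))) := by
    exact (MeasurePreserving.id _).prod ⟨(scalePair m).measurable, map_scalePair m⟩
  have hcoe : ⇑(scaleEquiv k m) = Prod.map (id : (Fin k → ℝ) → (Fin k → ℝ)) ⇑(scalePair m) := rfl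
  rw [hcoe, h3]
  exact hmp.map_eq

lemma badQ_meas (k m : ℕ) :
    MeasurableSet {q : (Fin k → ℝ) × (Fin m → ℝ) × (Fin m → ℝ) | ∃ i, q.2.1 i = 0} := by
  have h : {q : (Fin k → ℝ) × (Fin m → ℝ) × (Fin m → ℝ) | ∃ i, q.2.1 i = 0}
      = ⋃ i, {q : (Fin k → ℝ) × (Fin m → ℝ) × (Fin m → ℝ) | q.2.1 i = 0} := by
    ext q; simp
  rw [h]
  exact MeasurableSet.iUnion fun i =>
    ((measurable_pi_apply i).comp (measurable_fst.comp measurable_snd))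
      (measurableSet_singleton 0)

lemma badQ_null (k m : ℕ) :
    (volume : Measure ((Fin k → ℝ) × (Fin m → ℝ) × (Fin m → ℝ)))
      {q | ∃ i, q.2.1 i = 0} = 0 := by
  have hset : {q : (Fin k → ℝ) × (Fin m → ℝ) × (Fin m → ℝ) | ∃ i, q.2.1 i = 0}
      = (univ : Set (Fin k → ℝ)) ×ˢ (({v | ∃ i, v i = 0} : Set (Fin m → ℝ)) ×ˢ
          (univ : Set (Fin m → ℝ))) := by
    ext q
    simp [Set.mem_prod]
  rw [Measure.volume_eq_prod, hset, Measure.prod_prod, Measure.volume_eq_prod,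
    Measure.prod_prod, bad_null m]
  simp

lemma badE_null (A : Matrix (Fin m) (Fin k) ℝ) :
    (volume : Measure ((Fin k → ℝ) × (Fin m → ℝ) × (Fin m → ℝ)))
      {p | ∃ i, (A.mulVec p.1 + p.2.1) i = 0} = 0 := by
  have hpre : {p : (Fin k → ℝ) × (Fin m → ℝ) × (Fin m → ℝ) | ∃ i, (A.mulVec p.1 + p.2.1) i = 0}
      = (shearEquiv A) ⁻¹' {q | ∃ i, q.2.1 i = 0} := rfl
  rw [hpre, ← Measure.map_apply (shearEquiv A).measurable (badQ_meas k m),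
    (shear_preserving A).map_eq]
  exact badQ_null k m

lemma goodE_ae (A : Matrix (Fin m) (Fin k) ℝ) :
    ∀ᵐ p ∂(volume : Measure ((Fin k → ℝ) × (Fin m → ℝ) × (Fin m → ℝ))),
      ∀ i, (A.mulVec p.1 + p.2.1) i ≠ 0 := by
  rw [ae_iff]
  convert badE_null A using 2
  ext p
  push_neg
  rfl

end SepModelAux

set_option maxHeartbeats 2000000 in
open SepModelAux in
/-- Separable model `y = n ⊙ (A x + η)` with intermediate variable `u = A x + η`:
if `x`, `η`, `n` are mutually independent with pdfs `πx`, `πη`, `πn`, then the triple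
`(x, u, y)` has joint pdf
`(ξ, v, w) ↦ πx ξ * πη (v - A ξ) * (∏ i, |v i|⁻¹) * πn (w / v)` (componentwise division). -/
theorem separable_model_joint_density {Ω : Type*} [MeasurableSpace Ω]
    (P : Measure Ω) [IsProbabilityMeasure P] {m k : ℕ}
    (x : Ω → Fin k → ℝ) (η n : Ω → Fin m → ℝ)
    (hx : Measurable x) (hη : Measurable η) (hn : Measurable n)
    (πx : (Fin k → ℝ) → ℝ≥0) (πη πn : (Fin m → ℝ) → ℝ≥0)
    (hπx : Measure.map x P = volume.withDensity fun t => (πx t : ℝ≥0∞))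
    (hπη : Measure.map η P = volume.withDensity fun t => (πη t : ℝ≥0∞))
    (hπn : Measure.map n P = volume.withDensity fun t => (πn t : ℝ≥0∞))
    (hindep : Measure.map (fun ω => (x ω, η ω, n ω)) P
        = (Measure.map x P).prod ((Measure.map η P).prod (Measure.map n P)))
    (A : Matrix (Fin m) (Fin k) ℝ) :
    Measure.map
        (fun ω => (x ω, A.mulVec (x ω) + η ω,
          fun i => n ω i * (A.mulVec (x ω) + η ω) i)) P
      = volume.withDensity
          (fun p : (Fin k → ℝ) × (Fin m → ℝ) × (Fin m → ℝ) =>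
            (πx p.1 : ℝ≥0∞) * (πη (p.2.1 - A.mulVec p.1) : ℝ≥0∞)
              * ENNReal.ofReal (∏ i, |p.2.1 i|⁻¹)
              * (πn (fun i => p.2.2 i / p.2.1 i) : ℝ≥0∞)) := by
  classical
  set σ : (Fin k → ℝ) × (Fin m → ℝ) × (Fin m → ℝ) → ℝ≥0∞ := fun p =>
    (πx p.1 : ℝ≥0∞) * (πη (p.2.1 - A.mulVec p.1) : ℝ≥0∞)
      * ENNReal.ofReal (∏ i, |p.2.1 i|⁻¹)
      * (πn (fun i => p.2.2 i / p.2.1 i) : ℝ≥0∞) with hσ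
  -- total masses of the densities
  have hxtot : ∫⁻ t, (πx t : ℝ≥0∞) ∂volume = 1 := by
    have h1 : (volume.withDensity fun t => (πx t : ℝ≥0∞)) Set.univ = 1 := by
      rw [← hπx]
      haveI := Measure.isProbabilityMeasure_map (μ := P) hx.aemeasurable
      exact measure_univ
    rwa [withDensity_apply _ MeasurableSet.univ, Measure.restrict_univ] at h1
  have hηtot : ∫⁻ t, (πη t : ℝ≥0∞) ∂volume = 1 := by
    have h1 : (volume.withDensity fun t => (πη t : ℝ≥0∞)) Set.univ = 1 := by
      rw [← hπη]
      haveI := Measure.isProbabilityMeasure_map (μ := P) hη.aemeasurable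
      exact measure_univ
    rwa [withDensity_apply _ MeasurableSet.univ, Measure.restrict_univ] at h1
  have hntot : ∫⁻ t, (πn t : ℝ≥0∞) ∂volume = 1 := by
    have h1 : (volume.withDensity fun t => (πn t : ℝ≥0∞)) Set.univ = 1 := by
      rw [← hπn]
      haveI := Measure.isProbabilityMeasure_map (μ := P) hn.aemeasurable
      exact measure_univ
    rwa [withDensity_apply _ MeasurableSet.univ, Measure.restrict_univ] at h1
  -- measurable minorants of the densities
  obtain ⟨f₀, hf₀m, hf₀le, hf₀int, hf₀wd⟩ := exists_good_minorant volume
    (fun t => (πx t : ℝ≥0∞)) (by rw [hxtot]; exact ENNReal.one_ne_top)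
  obtain ⟨g₀, hg₀m, hg₀le, hg₀int, hg₀wd⟩ := exists_good_minorant volume
    (fun t => (πη t : ℝ≥0∞)) (by rw [hηtot]; exact ENNReal.one_ne_top)
  obtain ⟨h₀, hh₀m, hh₀le, hh₀int, hh₀wd⟩ := exists_good_minorant volume
    (fun t => (πn t : ℝ≥0∞)) (by rw [hntot]; exact ENNReal.one_ne_top)
  set ρ₀ : (Fin k → ℝ) × (Fin m → ℝ) × (Fin m → ℝ) → ℝ≥0∞ := fun p =>
    f₀ p.1 * (g₀ p.2.1 * h₀ p.2.2) with hρ₀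
  -- the joint law as a density over the triple product
  have hjm : Measurable fun ω => (x ω, η ω, n ω) := hx.prodMk (hη.prodMk hn)
  have sfx : SigmaFinite (volume.withDensity f₀) :=
    SigmaFinite.withDensity_of_ne_top' fun a => ((hf₀le a).trans_lt ENNReal.coe_lt_top).ne
  have sfg : SigmaFinite (volume.withDensity g₀) :=
    SigmaFinite.withDensity_of_ne_top' fun a => ((hg₀le a).trans_lt ENNReal.coe_lt_top).ne
  have sfh : SigmaFinite (volume.withDensity h₀) :=
    SigmaFinite.withDensity_of_ne_top' fun a => ((hh₀le a).trans_lt ENNReal.coe_lt_top).ne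
  have sfgh : SigmaFinite (((volume : Measure (Fin m → ℝ)).prod volume).withDensity
      fun q => g₀ q.1 * h₀ q.2) := by
    refine SigmaFinite.withDensity_of_ne_top' fun q => ENNReal.mul_ne_top ?_ ?_
    · exact ((hg₀le q.1).trans_lt ENNReal.coe_lt_top).ne
    · exact ((hh₀le q.2).trans_lt ENNReal.coe_lt_top).ne
  have hjoint : Measure.map (fun ω => (x ω, η ω, n ω)) P = volume.withDensity ρ₀ := by
    rw [hindep, hπx, hπη, hπn, hf₀wd, hg₀wd, hh₀wd]
    rw [prod_withDensity hg₀m hh₀m sfg sfh]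
    have hstep := prod_withDensity (μ := (volume : Measure (Fin k → ℝ)))
      (ν := (volume : Measure (Fin m → ℝ)).prod volume)
      (f := f₀) (g := fun q => g₀ q.1 * h₀ q.2) hf₀m
      ((hg₀m.comp measurable_fst).mul (hh₀m.comp measurable_snd)) sfx sfgh
    rw [hstep]
    rfl
  -- rewrite the LHS as a pushforward of the joint law
  have hAdd : Measurable fun p : (Fin k → ℝ) × (Fin m → ℝ) × (Fin m → ℝ) =>
      A.mulVec p.1 + p.2.1 :=
    ((measurable_mulVec A).comp measurable_fst).add (measurable_fst.comp measurable_snd)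
  set T : (Fin k → ℝ) × (Fin m → ℝ) × (Fin m → ℝ) →
      (Fin k → ℝ) × (Fin m → ℝ) × (Fin m → ℝ) := fun p =>
    (p.1, A.mulVec p.1 + p.2.1, fun i => p.2.2 i * (A.mulVec p.1 + p.2.1) i) with hTdef
  have hTm : Measurable T := by
    refine measurable_fst.prodMk (hAdd.prodMk ?_)
    exact measurable_pi_lambda _ fun i =>
      ((measurable_pi_apply i).comp (measurable_snd.comp measurable_snd)).mul
        ((measurable_pi_apply i).comp hAdd)
  have hcomp : (fun ω => (x ω, A.mulVec (x ω) + η ω,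
      fun i => n ω i * (A.mulVec (x ω) + η ω) i)) = T ∘ (fun ω => (x ω, η ω, n ω)) := rfl
  rw [hcomp, ← Measure.map_map hTm hjm, hjoint]
  -- the global bijection
  set Φ : ((Fin k → ℝ) × (Fin m → ℝ) × (Fin m → ℝ)) ≃ᵐ
      ((Fin k → ℝ) × (Fin m → ℝ) × (Fin m → ℝ)) := (shearEquiv A).trans (scaleEquiv k m) with hΦdef
  have haeTΦ : T =ᵐ[(volume : Measure ((Fin k → ℝ) × (Fin m → ℝ) × (Fin m → ℝ)))] ⇑Φ := by
    filter_upwards [goodE_ae A] with p hp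
    refine Prod.ext rfl (Prod.ext rfl ?_)
    funext i
    exact (if_neg (hp i)).symm
  have haeTΦ' : T =ᵐ[volume.withDensity ρ₀] ⇑Φ :=
    haeTΦ.filter_mono (withDensity_absolutelyContinuous volume ρ₀).ae_le
  rw [Measure.map_congr haeTΦ']
  -- replace the minorant density by the true one
  set ρπ : (Fin k → ℝ) × (Fin m → ℝ) × (Fin m → ℝ) → ℝ≥0∞ := fun p =>
    (πx p.1 : ℝ≥0∞) * ((πη p.2.1 : ℝ≥0∞) * (πn p.2.2 : ℝ≥0∞)) with hρπ
  have hρ₀tot : ∫⁻ p, ρ₀ p ∂volume = 1 := by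
    have h1 : (volume.withDensity ρ₀) Set.univ = 1 := by
      rw [← hjoint]
      haveI := Measure.isProbabilityMeasure_map (μ := P) hjm.aemeasurable
      exact measure_univ
    rwa [withDensity_apply _ MeasurableSet.univ, Measure.restrict_univ] at h1
  have hρle : ρ₀ ≤ ρπ := fun p =>
    mul_le_mul' (hf₀le _) (mul_le_mul' (hg₀le _) (hh₀le _))
  have hpair : ∫⁻ q, (πη q.1 : ℝ≥0∞) * (πn q.2 : ℝ≥0∞)
      ∂((volume : Measure (Fin m → ℝ)).prod volume) ≤ 1 := by
    have h2 := lintegral_mul_prod_le (volume : Measure (Fin m → ℝ)) volume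
      (fun e => (πη e : ℝ≥0∞)) (fun ν => (πn ν : ℝ≥0∞))
      (fun a => ENNReal.coe_ne_top) (by rw [hntot]; exact ENNReal.one_ne_top)
    rwa [hηtot, hntot, one_mul] at h2
  have hρπtot : ∫⁻ p, ρπ p ∂volume ≤ 1 := by
    have h2 := lintegral_mul_prod_le (volume : Measure (Fin k → ℝ))
      ((volume : Measure (Fin m → ℝ)).prod volume)
      (fun ξ => (πx ξ : ℝ≥0∞)) (fun q => (πη q.1 : ℝ≥0∞) * (πn q.2 : ℝ≥0∞))
      (fun a => ENNReal.coe_ne_top) (ne_top_of_le_ne_top ENNReal.one_ne_top hpair)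
    rw [hxtot, one_mul] at h2
    exact h2.trans hpair
  have hwd : volume.withDensity ρπ = volume.withDensity ρ₀ :=
    wd_eq_of_le hρle (by rw [hρ₀tot]; exact hρπtot)
      (by rw [hρ₀tot]; exact ENNReal.one_ne_top)
  rw [← hwd]
  -- the density transported through `Φ`
  set Jinv : (Fin k → ℝ) × (Fin m → ℝ) × (Fin m → ℝ) → ℝ≥0∞ := fun p =>
    ENNReal.ofReal (∏ i, |(A.mulVec p.1 + p.2.1) i|) with hJinv
  have hae2 : (fun p => Jinv p * σ (Φ p)) =ᵐ[(volume :
      Measure ((Fin k → ℝ) × (Fin m → ℝ) × (Fin m → ℝ)))] ρπ := by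
    filter_upwards [goodE_ae A] with p hp
    have hΦp : Φ p = (p.1, A.mulVec p.1 + p.2.1,
        fun i => p.2.2 i * (A.mulVec p.1 + p.2.1) i) := by
      refine Prod.ext rfl (Prod.ext rfl ?_)
      funext i
      exact if_neg (hp i)
    simp only [hΦp, hσ, hρπ, hJinv]
    have h1 : A.mulVec p.1 + p.2.1 - A.mulVec p.1 = p.2.1 := add_sub_cancel_left _ _
    have h2 : (fun i => (p.2.2 i * (A.mulVec p.1 + p.2.1) i) / (A.mulVec p.1 + p.2.1) i)
        = p.2.2 := funext fun i => mul_div_cancel_right₀ _ (hp i)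
    rw [h1, h2]
    have h3 : ENNReal.ofReal (∏ i, |(A.mulVec p.1 + p.2.1) i|)
        * ENNReal.ofReal (∏ i, |(A.mulVec p.1 + p.2.1) i|⁻¹) = 1 := by
      rw [← ENNReal.ofReal_mul (Finset.prod_nonneg fun i _ => abs_nonneg _),
        ← Finset.prod_mul_distrib]
      have h4 : ∀ i ∈ Finset.univ, |(A.mulVec p.1 + p.2.1) i| * |(A.mulVec p.1 + p.2.1) i|⁻¹
          = 1 := fun i _ => mul_inv_cancel₀ (abs_ne_zero.mpr (hp i))
      rw [Finset.prod_congr rfl h4, Finset.prod_const_one, ENNReal.ofReal_one]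
    calc ENNReal.ofReal (∏ i, |(A.mulVec p.1 + p.2.1) i|)
          * ((πx p.1 : ℝ≥0∞) * (πη p.2.1 : ℝ≥0∞)
            * ENNReal.ofReal (∏ i, |(A.mulVec p.1 + p.2.1) i|⁻¹) * (πn p.2.2 : ℝ≥0∞))
        = (ENNReal.ofReal (∏ i, |(A.mulVec p.1 + p.2.1) i|)
            * ENNReal.ofReal (∏ i, |(A.mulVec p.1 + p.2.1) i|⁻¹))
          * ((πx p.1 : ℝ≥0∞) * ((πη p.2.1 : ℝ≥0∞) * (πn p.2.2 : ℝ≥0∞))) := by ring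
      _ = (πx p.1 : ℝ≥0∞) * ((πη p.2.1 : ℝ≥0∞) * (πn p.2.2 : ℝ≥0∞)) := by rw [h3, one_mul]
  rw [← withDensity_congr_ae hae2]
  have hJm : Measurable Jinv := (measurable_absprod m).comp hAdd
  rw [show (volume.withDensity fun p => Jinv p * σ (Φ p))
      = (volume.withDensity Jinv).withDensity (fun p => σ (Φ p)) from
    (withDensity_mul_aux volume hJm (fun p => ENNReal.ofReal_lt_top) (fun p => σ (Φ p))).symm]
  rw [map_equiv_withDensity Φ (volume.withDensity Jinv) σ]
  have hmapΦ : Measure.map Φ (volume.withDensity Jinv) = volume := by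
    have hcoe : ⇑Φ = ⇑(scaleEquiv k m) ∘ ⇑(shearEquiv A) := rfl
    rw [hcoe, ← Measure.map_map (scaleEquiv k m).measurable (shearEquiv A).measurable]
    have hshear : Measure.map (shearEquiv A) (volume.withDensity Jinv)
        = volume.withDensity (fun q : (Fin k → ℝ) × (Fin m → ℝ) × (Fin m → ℝ) =>
            ENNReal.ofReal (∏ i, |q.2.1 i|)) := by
      have hW := map_equiv_withDensity (shearEquiv A) volume
        (fun q : (Fin k → ℝ) × (Fin m → ℝ) × (Fin m → ℝ) => ENNReal.ofReal (∏ i, |q.2.1 i|))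
      rw [(shear_preserving A).map_eq] at hW
      exact hW
    rw [hshear, map_scaleEquiv k m]
  rw [hmapΦ]
end
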